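/- Let (X^ℓ, W^ℓ, ε_ℓ)_{ℓ∈ℕ} be the output of the IRLS-M algorithm for a linear map 𝒮 : M_{n×p} → ℂ^m and data ℳ ∈ ℂ^m. Then there exists a constant 𝒜 > 0 such that for all ℓ ∈ ℕ, 2𝒜·[𝒥(X^ℓ, W^ℓ) − 𝒥(X^{ℓ+1}, W^{ℓ+1})] ≥ ‖X^{ℓ+1} − X^ℓ‖_F², where 𝒥(X,W) = ½(‖W^{1/2}X‖_F² + ‖W^{−1/2}‖_F²). In particular, Σ_{ℓ} ‖X^{ℓ+1} − X^ℓ‖_F² < ∞ and lim_{ℓ→∞} ‖X^{ℓ+1} − X^ℓ‖_F = 0. -/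

import Mathlib

open Matrix
open scoped ComplexOrder

namespace IRLSM

/-- Frobenius inner product `⟨X,Y⟩ = Tr(X Yᴴ)`. -/
noncomputable def frobInner {n p : ℕ} (X Y : Matrix (Fin n) (Fin p) ℂ) : ℂ :=
  Matrix.trace (X * Yᴴ)

/-- Frobenius norm. -/
noncomputable def frobNorm {n p : ℕ} (X : Matrix (Fin n) (Fin p) ℂ) : ℝ :=
  Real.sqrt (∑ i, ∑ j, Complex.normSq (X i j))

/-- Singular values of `X` in nonincreasing order, `sv X 0 = σ₁ ≥ sv X 1 = σ₂ ≥ …`;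
indices `≥ n` give `0`. -/
noncomputable def sv {n p : ℕ} (X : Matrix (Fin n) (Fin p) ℂ) : ℕ → ℝ :=
  fun i => ((List.ofFn fun j : Fin n =>
      Real.sqrt ((Matrix.isHermitian_mul_conjTranspose_self X).eigenvalues j)).mergeSort
      (fun a b => decide (b ≤ a))).getD i 0

/-- Nuclear norm `‖X‖_* = ∑ σᵢ(X)`. -/
noncomputable def nuclearNorm {n p : ℕ} (X : Matrix (Fin n) (Fin p) ℂ) : ℝ :=
  ∑ i : Fin n, sv X (i : ℕ)

/-- Positive square root of a positive semidefinite matrix (junk value `0` otherwise). -/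
noncomputable def matSqrt {n : ℕ} (W : Matrix (Fin n) (Fin n) ℂ) : Matrix (Fin n) (Fin n) ℂ :=
  @dite _ W.PosSemidef (Classical.dec _) (fun h => (h.1.eigenvectorUnitary : Matrix (Fin n) (Fin n) ℂ) *
    Matrix.diagonal ((↑) ∘ (√·) ∘ h.1.eigenvalues) *
    (star h.1.eigenvectorUnitary : Matrix (Fin n) (Fin n) ℂ)) (fun _ => 0)

/-- The functional `𝒥(X,W) = ½(‖W^{1/2}X‖_F² + ‖W^{-1/2}‖_F²)`. -/
noncomputable def Jfun {n p : ℕ} (X : Matrix (Fin n) (Fin p) ℂ)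
    (W : Matrix (Fin n) (Fin n) ℂ) : ℝ :=
  (frobNorm (matSqrt W * X) ^ 2 + frobNorm (matSqrt W⁻¹) ^ 2) / 2

/-- The restricted isometry constant `δ_k(𝒮)`: the smallest `δ ≥ 0` such that
`(1-δ)‖X‖_F² ≤ ‖𝒮(X)‖² ≤ (1+δ)‖X‖_F²` for all `X` of rank at most `k`. -/
noncomputable def ripConst {n p m : ℕ}
    (S : Matrix (Fin n) (Fin p) ℂ →ₗ[ℂ] (Fin m → ℂ)) (k : ℕ) : ℝ :=
  sInf {δ : ℝ | 0 ≤ δ ∧ ∀ X : Matrix (Fin n) (Fin p) ℂ, X.rank ≤ k →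
    (1 - δ) * frobNorm X ^ 2 ≤ ∑ i, Complex.normSq (S X i) ∧
      ∑ i, Complex.normSq (S X i) ≤ (1 + δ) * frobNorm X ^ 2}

/-- The rank null space property of order `k`. -/
def RNSP {n p m : ℕ} (S : Matrix (Fin n) (Fin p) ℂ →ₗ[ℂ] (Fin m → ℂ)) (k : ℕ) : Prop :=
  ∀ H : Matrix (Fin n) (Fin p) ℂ, S H = 0 → H ≠ 0 →
    ∀ H₁ H₂ : Matrix (Fin n) (Fin p) ℂ, H = H₁ + H₂ → H₁.rank ≤ k →
      nuclearNorm H₁ < nuclearNorm H₂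

/-- The strong rank null space property of order `k` with constant `η`. -/
def SRNSP {n p m : ℕ} (S : Matrix (Fin n) (Fin p) ℂ →ₗ[ℂ] (Fin m → ℂ)) (k : ℕ) (η : ℝ) : Prop :=
  ∀ X : Matrix (Fin n) (Fin p) ℂ, S X = 0 → X ≠ 0 →
    ∀ X₁ X₂ : Matrix (Fin n) (Fin p) ℂ, X = X₁ + X₂ → X₁.rank ≤ k →
      ∃ H₁ H₂ : Matrix (Fin n) (Fin p) ℂ, X = H₁ + H₂ ∧ H₁.rank ≤ 2 * k ∧
        frobInner H₁ H₂ = 0 ∧ X₁ * H₂ᴴ = 0 ∧ X₁ᴴ * H₂ = 0 ∧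
        nuclearNorm H₁ ≤ η * nuclearNorm H₂

/-- Best `k`-rank approximation error in the nuclear norm, `ρ_k(X)_*`. -/
noncomputable def rhoNuc {n p : ℕ} (k : ℕ) (X : Matrix (Fin n) (Fin p) ℂ) : ℝ :=
  sInf ((fun Z => nuclearNorm (X - Z)) '' {Z : Matrix (Fin n) (Fin p) ℂ | Z.rank ≤ k})

/-- `j^ε(u) = |u|` for `|u| ≥ ε` and `(u² + ε²)/(2ε)` otherwise. -/
noncomputable def jeps (ε u : ℝ) : ℝ :=
  if ε ≤ |u| then |u| else (u ^ 2 + ε ^ 2) / (2 * ε)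

/-- The functional `𝒥_ε(X) = ∑ᵢ j^ε(σᵢ(X))`. -/
noncomputable def Jeps {n p : ℕ} (ε : ℝ) (X : Matrix (Fin n) (Fin p) ℂ) : ℝ :=
  ∑ i : Fin n, jeps ε (sv X (i : ℕ))

/-- `(X^ℓ, W^ℓ, ε_ℓ)_ℓ` is an output of the IRLS-M algorithm with measurement map `S`,
data `M`, parameters `γ > 0` and `K`.  Here `X (ℓ+1)` is the weighted least squares
minimizer for the weight `W ℓ`, `ε (ℓ+1) = min (ε ℓ) (γ σ_{K+1}(X^{ℓ+1}))`, and
`W (ℓ+1)` is built from an eigendecomposition of `X^{ℓ+1}(X^{ℓ+1})ᴴ` together with the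
`ε`-stabilization of the singular values.  If `ε` reaches `0` the algorithm stops. -/
structure IsIRLSM {n p m : ℕ} (S : Matrix (Fin n) (Fin p) ℂ →ₗ[ℂ] (Fin m → ℂ))
    (M : Fin m → ℂ) (γ : ℝ) (K : ℕ)
    (X : ℕ → Matrix (Fin n) (Fin p) ℂ)
    (W : ℕ → Matrix (Fin n) (Fin n) ℂ)
    (ε : ℕ → ℝ) : Prop where
  w_init : W 0 = 1
  eps_init : ε 0 = 1
  x_feasible : ∀ ℓ : ℕ, ε ℓ ≠ 0 → S (X (ℓ + 1)) = M
  x_min : ∀ ℓ : ℕ, ε ℓ ≠ 0 → ∀ Y : Matrix (Fin n) (Fin p) ℂ, S Y = M →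
    frobNorm (matSqrt (W ℓ) * X (ℓ + 1)) ^ 2 ≤ frobNorm (matSqrt (W ℓ) * Y) ^ 2
  eps_update : ∀ ℓ : ℕ, ε ℓ ≠ 0 → ε (ℓ + 1) = min (ε ℓ) (γ * sv (X (ℓ + 1)) K)
  w_update : ∀ ℓ : ℕ, ε ℓ ≠ 0 → ε (ℓ + 1) ≠ 0 →
    ∃ U : Matrix (Fin n) (Fin n) ℂ, U * Uᴴ = 1 ∧ Uᴴ * U = 1 ∧
      X (ℓ + 1) * (X (ℓ + 1))ᴴ =
        U * Matrix.diagonal (fun i : Fin n => ((sv (X (ℓ + 1)) (i : ℕ) : ℂ)) ^ 2) * Uᴴ ∧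
      W (ℓ + 1) =
        U * Matrix.diagonal
            (fun i : Fin n => (((max (sv (X (ℓ + 1)) (i : ℕ)) (ε (ℓ + 1)) : ℝ) : ℂ))⁻¹) * Uᴴ
  w_stop : ∀ ℓ : ℕ, ε ℓ ≠ 0 → ε (ℓ + 1) = 0 → W (ℓ + 1) = W ℓ
  stopped : ∀ ℓ : ℕ, ε ℓ = 0 → X (ℓ + 1) = X ℓ ∧ W (ℓ + 1) = W ℓ ∧ ε (ℓ + 1) = 0

/-! ### Auxiliary lemmas for statement7 -/

lemma frobNorm_nonneg' {n p : ℕ} (X : Matrix (Fin n) (Fin p) ℂ) : 0 ≤ frobNorm X :=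
  Real.sqrt_nonneg _

lemma frobNorm_sq {n p : ℕ} (X : Matrix (Fin n) (Fin p) ℂ) :
    frobNorm X ^ 2 = (Matrix.trace (X * Xᴴ)).re := by
  rw [frobNorm, Real.sq_sqrt (Finset.sum_nonneg fun i _ =>
    Finset.sum_nonneg fun j _ => Complex.normSq_nonneg (X i j))]
  rw [Matrix.trace]
  simp only [Matrix.diag_apply, Matrix.mul_apply, Matrix.conjTranspose_apply, Complex.re_sum]
  refine Finset.sum_congr rfl fun i _ => Finset.sum_congr rfl fun j _ => ?_
  rw [RCLike.star_def, Complex.mul_conj]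
  simp

lemma matSqrt_of_psd {n : ℕ} {W : Matrix (Fin n) (Fin n) ℂ} (h : W.PosSemidef) :
    matSqrt W * matSqrt W = W ∧ (matSqrt W)ᴴ = matSqrt W := by
  rw [matSqrt, dif_pos h]
  have hs : (star h.1.eigenvectorUnitary : Matrix (Fin n) (Fin n) ℂ) *
      (h.1.eigenvectorUnitary : Matrix (Fin n) (Fin n) ℂ) = 1 := Unitary.coe_star_mul_self _
  constructor
  · conv_rhs => rw [h.1.spectral_theorem, Unitary.conjStarAlgAut_apply]
    calc _ = (h.1.eigenvectorUnitary : Matrix (Fin n) (Fin n) ℂ) *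
        (Matrix.diagonal ((↑) ∘ (√·) ∘ h.1.eigenvalues) *
          ((star h.1.eigenvectorUnitary : Matrix (Fin n) (Fin n) ℂ) *
            (h.1.eigenvectorUnitary : Matrix (Fin n) (Fin n) ℂ)) *
          Matrix.diagonal ((↑) ∘ (√·) ∘ h.1.eigenvalues)) *
        (star h.1.eigenvectorUnitary : Matrix (Fin n) (Fin n) ℂ) := by
          simp only [Matrix.mul_assoc]
      _ = _ := by
          rw [hs, Matrix.mul_one, Matrix.diagonal_mul_diagonal]
          congr 3
          funext i
          simp only [Function.comp_apply]
          rw [← Complex.ofReal_mul, Real.mul_self_sqrt (h.eigenvalues_nonneg i)]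
          rfl
  · rw [Matrix.conjTranspose_mul, Matrix.conjTranspose_mul, Matrix.diagonal_conjTranspose,
      Matrix.star_eq_conjTranspose, Matrix.conjTranspose_conjTranspose, Matrix.mul_assoc]
    congr 3
    funext i
    simp

lemma frobNorm_matSqrt_mul_sq {n p : ℕ} {W : Matrix (Fin n) (Fin n) ℂ} (h : W.PosSemidef)
    (X : Matrix (Fin n) (Fin p) ℂ) :
    frobNorm (matSqrt W * X) ^ 2 = (Matrix.trace (W * (X * Xᴴ))).re := by
  obtain ⟨h1, h2⟩ := matSqrt_of_psd h
  rw [frobNorm_sq, Matrix.conjTranspose_mul, h2, ← Matrix.mul_assoc,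
    Matrix.trace_mul_comm, ← Matrix.mul_assoc, ← Matrix.mul_assoc, h1, Matrix.mul_assoc]

lemma frobNorm_matSqrt_sq {n : ℕ} {W : Matrix (Fin n) (Fin n) ℂ} (h : W.PosSemidef) :
    frobNorm (matSqrt W) ^ 2 = (Matrix.trace W).re := by
  obtain ⟨h1, h2⟩ := matSqrt_of_psd h
  rw [frobNorm_sq, h2, h1]

lemma sv_nonneg {n p : ℕ} (X : Matrix (Fin n) (Fin p) ℂ) (i : ℕ) : 0 ≤ sv X i := by
  rw [sv]
  set l := (List.ofFn fun j : Fin n =>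
      Real.sqrt ((Matrix.isHermitian_mul_conjTranspose_self X).eigenvalues j)) with hl
  set l' := l.mergeSort (fun a b => decide (b ≤ a)) with hl'
  by_cases h : i < l'.length
  · rw [List.getD_eq_getElem l' 0 h]
    have hmem : l'[i] ∈ l' := List.getElem_mem h
    have hmem2 : l'[i] ∈ l := (List.mergeSort_perm l _).mem_iff.mp hmem
    rw [hl] at hmem2
    obtain ⟨j, hj⟩ := List.mem_ofFn.mp hmem2
    rw [← hj]
    exact Real.sqrt_nonneg _
  · rw [List.getD_eq_default l' 0 (le_of_not_gt h)]

lemma udu_psd {n : ℕ} {U : Matrix (Fin n) (Fin n) ℂ} (hU' : Uᴴ * U = 1) {c : Fin n → ℝ}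
    (hc : ∀ i, 0 ≤ c i) :
    (U * Matrix.diagonal (fun i => (c i : ℂ)) * Uᴴ).PosSemidef := by
  exact (Matrix.posSemidef_diagonal_iff.mpr fun i => by
    exact_mod_cast Complex.zero_le_real.mpr (hc i)).mul_mul_conjTranspose_same U

lemma trace_diag_mul {n : ℕ} {v : Fin n → ℂ} (B : Matrix (Fin n) (Fin n) ℂ) :
    Matrix.trace (Matrix.diagonal v * B) = ∑ i, v i * B i i := by
  simp [Matrix.trace, Matrix.diag, Matrix.diagonal_mul]

lemma trace_udu_mul {n : ℕ} {U : Matrix (Fin n) (Fin n) ℂ} (v : Fin n → ℂ)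
    (A : Matrix (Fin n) (Fin n) ℂ) :
    Matrix.trace (U * Matrix.diagonal v * Uᴴ * A) = ∑ i, v i * (Uᴴ * A * U) i i := by
  have h : U * Matrix.diagonal v * Uᴴ * A = U * (Matrix.diagonal v * (Uᴴ * A)) := by
    simp [Matrix.mul_assoc]
  rw [h, Matrix.trace_mul_comm, Matrix.mul_assoc, ← Matrix.mul_assoc, ← trace_diag_mul]
  rw [Matrix.mul_assoc]

lemma trace_udu {n : ℕ} {U : Matrix (Fin n) (Fin n) ℂ} (hU' : Uᴴ * U = 1) (v : Fin n → ℂ) :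
    Matrix.trace (U * Matrix.diagonal v * Uᴴ) = ∑ i, v i := by
  rw [Matrix.trace_mul_cycle, hU', Matrix.one_mul, Matrix.trace_diagonal]

lemma inv_udu {n : ℕ} {U : Matrix (Fin n) (Fin n) ℂ} (hU : U * Uᴴ = 1) (hU' : Uᴴ * U = 1)
    {v : Fin n → ℂ} (hv : ∀ i, v i ≠ 0) :
    (U * Matrix.diagonal v * Uᴴ)⁻¹ = U * Matrix.diagonal (fun i => (v i)⁻¹) * Uᴴ := by
  apply Matrix.inv_eq_right_inv
  have : U * Matrix.diagonal v * Uᴴ * (U * Matrix.diagonal (fun i => (v i)⁻¹) * Uᴴ) =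
      U * (Matrix.diagonal v * Matrix.diagonal (fun i => (v i)⁻¹)) * Uᴴ := by
    simp only [Matrix.mul_assoc]
    rw [← Matrix.mul_assoc Uᴴ U, hU', Matrix.one_mul]
  rw [this, Matrix.diagonal_mul_diagonal]
  have : (fun i => v i * (v i)⁻¹) = fun _ : Fin n => (1 : ℂ) := by
    funext i; exact mul_inv_cancel₀ (hv i)
  rw [this, Matrix.diagonal_one, Matrix.mul_one, hU]

lemma udu_mul_udu {n : ℕ} {U : Matrix (Fin n) (Fin n) ℂ} (hU' : Uᴴ * U = 1)
    (v w : Fin n → ℂ) :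
    (U * Matrix.diagonal v * Uᴴ) * (U * Matrix.diagonal w * Uᴴ) =
      U * Matrix.diagonal (fun i => v i * w i) * Uᴴ := by
  simp only [Matrix.mul_assoc]
  rw [← Matrix.mul_assoc Uᴴ U, hU', Matrix.one_mul,
    ← Matrix.mul_assoc (Matrix.diagonal v), Matrix.diagonal_mul_diagonal]

lemma Jfun_eigen_parts {n p : ℕ} {U : Matrix (Fin n) (Fin n) ℂ}
    (hU : U * Uᴴ = 1) (hU' : Uᴴ * U = 1)
    {X : Matrix (Fin n) (Fin p) ℂ} {W : Matrix (Fin n) (Fin n) ℂ} {σ : Fin n → ℝ} {ε : ℝ}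
    (hσ : ∀ i, 0 ≤ σ i) (hε : 0 < ε)
    (hX : X * Xᴴ = U * Matrix.diagonal (fun i => ((σ i : ℂ)) ^ 2) * Uᴴ)
    (hW : W = U * Matrix.diagonal (fun i => (((max (σ i) ε : ℝ) : ℂ))⁻¹) * Uᴴ) :
    W.PosSemidef ∧ frobNorm (matSqrt W * X) ^ 2 = ∑ i, σ i ^ 2 / max (σ i) ε ∧
      frobNorm (matSqrt W⁻¹) ^ 2 = ∑ i, max (σ i) ε := by
  set m : Fin n → ℝ := fun i => max (σ i) ε with hm
  have hmpos : ∀ i, 0 < m i := fun i => lt_of_lt_of_le hε (le_max_right _ _)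
  have hcast : (fun i => (((m i : ℝ) : ℂ))⁻¹) = fun i => (((m i)⁻¹ : ℝ) : ℂ) := by
    funext i; rw [Complex.ofReal_inv]
  have hWpsd : W.PosSemidef := by
    rw [hW, hcast]
    exact udu_psd hU' fun i => inv_nonneg.mpr (hmpos i).le
  have hWinv : W⁻¹ = U * Matrix.diagonal (fun i => ((m i : ℝ) : ℂ)) * Uᴴ := by
    rw [hW, inv_udu hU hU' (fun i => inv_ne_zero (by exact_mod_cast (hmpos i).ne'))]
    simp [hm]
  have hWinvpsd : W⁻¹.PosSemidef := by
    rw [hWinv]; exact udu_psd hU' fun i => (hmpos i).le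
  refine ⟨hWpsd, ?_, ?_⟩
  · rw [frobNorm_matSqrt_mul_sq hWpsd, hX, hW, udu_mul_udu hU', trace_udu hU']
    have : (∑ i, ((m i : ℂ))⁻¹ * ((σ i : ℂ)) ^ 2) = ((∑ i, σ i ^ 2 / m i : ℝ) : ℂ) := by
      rw [Complex.ofReal_sum]
      exact Finset.sum_congr rfl fun i _ => by push_cast; ring
    rw [this, Complex.ofReal_re]
  · rw [frobNorm_matSqrt_sq hWinvpsd, hWinv, trace_udu hU']
    rw [← Complex.ofReal_sum, Complex.ofReal_re]

lemma scalar_key {σ ε c : ℝ} (hσ : 0 ≤ σ) (hε : 0 < ε) (hc : ε ≤ c) :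
    σ ^ 2 / max σ ε + max σ ε ≤ σ ^ 2 / c + c := by
  set m := max σ ε with hm
  have hm0 : 0 < m := lt_of_lt_of_le hε (le_max_right _ _)
  have hσm : σ ≤ m := le_max_left _ _
  have hεm : ε ≤ m := le_max_right _ _
  have hc0 : 0 < c := lt_of_lt_of_le hε hc
  rw [← sub_nonneg]
  have key : σ ^ 2 / c + c - (σ ^ 2 / m + m) = (m - c) * (σ ^ 2 - c * m) / (c * m) := by
    field_simp
    ring
  rw [key]
  apply div_nonneg _ (by positivity)
  rcases le_or_gt c m with h | h
  · rcases max_cases σ ε with ⟨he, _⟩ | ⟨he, hlt⟩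
    · simp only [hm, he] at h ⊢
      nlinarith [mul_nonneg hσ (sq_nonneg (σ - c))]
    · have hce : c = ε := le_antisymm (by simpa [hm, he] using h) hc
      simp [hm, he, hce]
  · have h1 : σ ^ 2 ≤ c * m := by nlinarith
    nlinarith [mul_nonneg (sub_nonneg.2 h.le) (sub_nonneg.2 h1)]

lemma pdp_diag {n : ℕ} (P : Matrix (Fin n) (Fin n) ℂ) (v : Fin n → ℂ) (k : Fin n) :
    (P * Matrix.diagonal v * Pᴴ) k k = ∑ i, v i * (Complex.normSq (P k i) : ℂ) := by
  rw [Matrix.mul_apply]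
  simp only [Matrix.mul_diagonal, Matrix.conjTranspose_apply]
  refine Finset.sum_congr rfl fun i _ => ?_
  rw [RCLike.star_def, mul_comm (P k i) (v i), mul_assoc, Complex.mul_conj]

lemma rowsum_one {n : ℕ} {P : Matrix (Fin n) (Fin n) ℂ} (hP : P * Pᴴ = 1) (k : Fin n) :
    ∑ i, Complex.normSq (P k i) = 1 := by
  have h := congrFun (congrFun hP k) k
  simp only [Matrix.mul_apply, Matrix.conjTranspose_apply, Matrix.one_apply_eq] at h
  have : (((∑ i, Complex.normSq (P k i) : ℝ)) : ℂ) = 1 := by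
    rw [Complex.ofReal_sum, ← h]
    refine Finset.sum_congr rfl fun i _ => ?_
    rw [RCLike.star_def, Complex.mul_conj]
  exact_mod_cast this

lemma vonNeumann {n : ℕ} {U V : Matrix (Fin n) (Fin n) ℂ}
    (hU : U * Uᴴ = 1) (hU' : Uᴴ * U = 1) (hV : V * Vᴴ = 1) (hV' : Vᴴ * V = 1)
    {c σ : Fin n → ℝ} {ε : ℝ} (hε : 0 < ε) (hσ : ∀ i, 0 ≤ σ i) (hc : ∀ k, ε ≤ c k) :
    ∑ i, (σ i ^ 2 / max (σ i) ε + max (σ i) ε) ≤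
      (Matrix.trace ((U * Matrix.diagonal (fun k => ((c k : ℂ))⁻¹) * Uᴴ) *
        (V * Matrix.diagonal (fun i => ((σ i : ℂ)) ^ 2) * Vᴴ))).re + ∑ k, c k := by
  set P := Uᴴ * V with hPdef
  have hPH : Pᴴ = Vᴴ * U := by
    rw [hPdef, Matrix.conjTranspose_mul, Matrix.conjTranspose_conjTranspose]
  have hP : P * Pᴴ = 1 := by
    rw [hPdef, hPH, Matrix.mul_assoc, ← Matrix.mul_assoc V, hV, Matrix.one_mul, hU']
  have hP' : Pᴴ * P = 1 := by
    rw [hPdef, hPH, Matrix.mul_assoc, ← Matrix.mul_assoc U, hU, Matrix.one_mul, hV']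
  set q : Fin n → Fin n → ℝ := fun k i => Complex.normSq (P k i) with hq
  have hqnn : ∀ k i, 0 ≤ q k i := fun k i => Complex.normSq_nonneg _
  have hrow : ∀ k, ∑ i, q k i = 1 := rowsum_one hP
  have hcol : ∀ i, ∑ k, q k i = 1 := by
    intro i
    have := rowsum_one (P := Pᴴ) (by rwa [Matrix.conjTranspose_conjTranspose]) i
    simpa [Matrix.conjTranspose_apply, hq, RCLike.star_def, Complex.normSq_conj] using this
  have hmid : Uᴴ * (V * Matrix.diagonal (fun i => ((σ i : ℂ)) ^ 2) * Vᴴ) * U =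
      P * Matrix.diagonal (fun i => ((σ i : ℂ)) ^ 2) * Pᴴ := by
    rw [hPdef, hPH]; simp only [Matrix.mul_assoc]
  have htr : (Matrix.trace ((U * Matrix.diagonal (fun k => ((c k : ℂ))⁻¹) * Uᴴ) *
        (V * Matrix.diagonal (fun i => ((σ i : ℂ)) ^ 2) * Vᴴ))).re =
      ∑ k, ∑ i, (c k)⁻¹ * (σ i ^ 2 * q k i) := by
    rw [trace_udu_mul, Finset.sum_congr rfl (fun k _ => by rw [hmid, pdp_diag])]
    have : (∑ k, ((c k : ℂ))⁻¹ * ∑ i, ((σ i : ℂ)) ^ 2 * (q k i : ℂ)) =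
        (((∑ k, ∑ i, (c k)⁻¹ * (σ i ^ 2 * q k i)) : ℝ) : ℂ) := by
      push_cast
      simp [Finset.mul_sum]
    rw [this, Complex.ofReal_re]
  rw [htr]
  have key : ∀ k i, q k i * (σ i ^ 2 / max (σ i) ε + max (σ i) ε) ≤
      (c k)⁻¹ * (σ i ^ 2 * q k i) + c k * q k i := by
    intro k i
    calc q k i * (σ i ^ 2 / max (σ i) ε + max (σ i) ε)
        ≤ q k i * (σ i ^ 2 / c k + c k) :=
          mul_le_mul_of_nonneg_left (scalar_key (hσ i) hε (hc k)) (hqnn k i)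
      _ = (c k)⁻¹ * (σ i ^ 2 * q k i) + c k * q k i := by ring
  calc ∑ i, (σ i ^ 2 / max (σ i) ε + max (σ i) ε)
      = ∑ i, (∑ k, q k i) * (σ i ^ 2 / max (σ i) ε + max (σ i) ε) :=
        Finset.sum_congr rfl fun i _ => by rw [hcol i, one_mul]
    _ = ∑ i, ∑ k, q k i * (σ i ^ 2 / max (σ i) ε + max (σ i) ε) := by
        simp [Finset.sum_mul]
    _ = ∑ k, ∑ i, q k i * (σ i ^ 2 / max (σ i) ε + max (σ i) ε) := Finset.sum_comm
    _ ≤ ∑ k, ∑ i, ((c k)⁻¹ * (σ i ^ 2 * q k i) + c k * q k i) :=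
        Finset.sum_le_sum fun k _ => Finset.sum_le_sum fun i _ => key k i
    _ = (∑ k, ∑ i, (c k)⁻¹ * (σ i ^ 2 * q k i)) + ∑ k, c k := by
        rw [← Finset.sum_add_distrib]
        refine Finset.sum_congr rfl fun k _ => ?_
        have : ∑ i, ((c k)⁻¹ * (σ i ^ 2 * q k i) + c k * q k i) =
            (∑ i, (c k)⁻¹ * (σ i ^ 2 * q k i)) + c k * ∑ i, q k i := by
          rw [Finset.sum_add_distrib, Finset.mul_sum]
        rw [this, hrow k, mul_one]

lemma trace_weight_quad {n p : ℕ} {U : Matrix (Fin n) (Fin n) ℂ} (c : Fin n → ℝ)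
    (H : Matrix (Fin n) (Fin p) ℂ) :
    (Matrix.trace ((U * Matrix.diagonal (fun k => ((c k : ℂ))⁻¹) * Uᴴ) * (H * Hᴴ))).re =
      ∑ k, (c k)⁻¹ * ∑ j, Complex.normSq ((Uᴴ * H) k j) := by
  rw [trace_udu_mul]
  have hmid : ∀ k, (Uᴴ * (H * Hᴴ) * U) k k =
      (((∑ j, Complex.normSq ((Uᴴ * H) k j) : ℝ)) : ℂ) := by
    intro k
    have : Uᴴ * (H * Hᴴ) * U = (Uᴴ * H) * (Uᴴ * H)ᴴ := by
      rw [Matrix.conjTranspose_mul, Matrix.conjTranspose_conjTranspose]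
      simp only [Matrix.mul_assoc]
    rw [this, Matrix.mul_apply, Complex.ofReal_sum]
    refine Finset.sum_congr rfl fun j _ => ?_
    rw [Matrix.conjTranspose_apply, RCLike.star_def, Complex.mul_conj]
  rw [Finset.sum_congr rfl fun k _ => by rw [hmid k]]
  have : (∑ k, ((c k : ℂ))⁻¹ * (((∑ j, Complex.normSq ((Uᴴ * H) k j) : ℝ)) : ℂ)) =
      (((∑ k, (c k)⁻¹ * ∑ j, Complex.normSq ((Uᴴ * H) k j) : ℝ)) : ℂ) := by
    push_cast
    ring
  rw [this, Complex.ofReal_re]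

lemma quad_nonneg {n p : ℕ} {U : Matrix (Fin n) (Fin n) ℂ} {c : Fin n → ℝ}
    (hc : ∀ k, 0 < c k) (H : Matrix (Fin n) (Fin p) ℂ) :
    0 ≤ (Matrix.trace ((U * Matrix.diagonal (fun k => ((c k : ℂ))⁻¹) * Uᴴ) * (H * Hᴴ))).re := by
  rw [trace_weight_quad]
  exact Finset.sum_nonneg fun k _ => mul_nonneg (inv_nonneg.mpr (hc k).le)
    (Finset.sum_nonneg fun j _ => Complex.normSq_nonneg _)

lemma quad_lower {n p : ℕ} {U : Matrix (Fin n) (Fin n) ℂ} (hU : U * Uᴴ = 1) {c : Fin n → ℝ}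
    {A : ℝ} (hc : ∀ k, 0 < c k) (hA : ∀ k, c k ≤ A) (H : Matrix (Fin n) (Fin p) ℂ) :
    frobNorm H ^ 2 ≤
      A * (Matrix.trace ((U * Matrix.diagonal (fun k => ((c k : ℂ))⁻¹) * Uᴴ) * (H * Hᴴ))).re := by
  rw [trace_weight_quad]
  have hfrob : frobNorm H ^ 2 = ∑ k, ∑ j, Complex.normSq ((Uᴴ * H) k j) := by
    have h1 : frobNorm (Uᴴ * H) ^ 2 = ∑ k, ∑ j, Complex.normSq ((Uᴴ * H) k j) := by
      rw [frobNorm, Real.sq_sqrt (Finset.sum_nonneg fun i _ =>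
        Finset.sum_nonneg fun j _ => Complex.normSq_nonneg ((Uᴴ * H) i j))]
    have h2 : frobNorm H ^ 2 = frobNorm (Uᴴ * H) ^ 2 := by
      rw [frobNorm_sq, frobNorm_sq]
      congr 1
      rw [Matrix.conjTranspose_mul, Matrix.conjTranspose_conjTranspose,
        Matrix.trace_mul_comm (Uᴴ * H)]
      rw [← Matrix.mul_assoc, Matrix.mul_assoc Hᴴ U Uᴴ, hU, Matrix.mul_one,
        Matrix.trace_mul_comm]
    rw [h2, h1]
  rw [hfrob, Finset.mul_sum]
  refine Finset.sum_le_sum fun k _ => ?_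
  have hr : 0 ≤ ∑ j, Complex.normSq ((Uᴴ * H) k j) :=
    Finset.sum_nonneg fun j _ => Complex.normSq_nonneg _
  have h1 : (1 : ℝ) ≤ A * (c k)⁻¹ := by
    rw [← div_eq_mul_inv, le_div_iff₀ (hc k), one_mul]
    exact hA k
  calc ∑ j, Complex.normSq ((Uᴴ * H) k j) = 1 * ∑ j, Complex.normSq ((Uᴴ * H) k j) :=
        (one_mul _).symm
    _ ≤ (A * (c k)⁻¹) * ∑ j, Complex.normSq ((Uᴴ * H) k j) :=
        mul_le_mul_of_nonneg_right h1 hr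
    _ = A * ((c k)⁻¹ * ∑ j, Complex.normSq ((Uᴴ * H) k j)) := by ring

lemma min_orth {n p m : ℕ} {W : Matrix (Fin n) (Fin n) ℂ} (hW : W.IsHermitian)
    {S : Matrix (Fin n) (Fin p) ℂ →ₗ[ℂ] (Fin m → ℂ)} {M : Fin m → ℂ}
    {X₀ X₁ : Matrix (Fin n) (Fin p) ℂ} (h₀ : S X₀ = M) (h₁ : S X₁ = M)
    (hmin : ∀ Y, S Y = M →
      (Matrix.trace (W * (X₁ * X₁ᴴ))).re ≤ (Matrix.trace (W * (Y * Yᴴ))).re)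
    (hb : 0 ≤ (Matrix.trace (W * ((X₀ - X₁) * (X₀ - X₁)ᴴ))).re) :
    (Matrix.trace (W * ((X₀ - X₁) * (X₀ - X₁)ᴴ))).re ≤
      (Matrix.trace (W * (X₀ * X₀ᴴ))).re - (Matrix.trace (W * (X₁ * X₁ᴴ))).re := by
  set H := X₀ - X₁ with hH
  have hSH : S H = 0 := by rw [hH, map_sub, h₀, h₁, sub_self]
  set b := (Matrix.trace (W * (H * Hᴴ))).re with hbdef
  set c := (Matrix.trace (W * (X₁ * Hᴴ))).re with hcdef
  have hconj : Matrix.trace (W * (H * X₁ᴴ)) = (starRingEnd ℂ) (Matrix.trace (W * (X₁ * Hᴴ))) := by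
    have e : (W * (X₁ * Hᴴ))ᴴ = H * X₁ᴴ * W := by
      rw [Matrix.conjTranspose_mul, Matrix.conjTranspose_mul, hW.eq,
        Matrix.conjTranspose_conjTranspose]
    have h := Matrix.trace_conjTranspose (W * (X₁ * Hᴴ))
    rw [e, Complex.star_def] at h
    rw [← h, Matrix.trace_mul_comm]
  have expand : ∀ t : ℝ, (X₁ + (t : ℂ) • H) * (X₁ + (t : ℂ) • H)ᴴ =
      X₁ * X₁ᴴ + (t : ℂ) • (X₁ * Hᴴ) + (t : ℂ) • (H * X₁ᴴ) + ((t : ℂ) ^ 2) • (H * Hᴴ) := by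
    intro t
    rw [Matrix.conjTranspose_add, Matrix.conjTranspose_smul, Complex.star_def,
      Complex.conj_ofReal]
    simp only [Matrix.add_mul, Matrix.mul_add, Matrix.smul_mul, Matrix.mul_smul, smul_smul,
      smul_add, pow_two]
    abel
  have hqt : ∀ t : ℝ, (Matrix.trace (W * ((X₁ + (t : ℂ) • H) * (X₁ + (t : ℂ) • H)ᴴ))).re =
      (Matrix.trace (W * (X₁ * X₁ᴴ))).re + 2 * t * c + t ^ 2 * b := by
    intro t
    have e1 : W * ((X₁ + (t : ℂ) • H) * (X₁ + (t : ℂ) • H)ᴴ) =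
        W * (X₁ * X₁ᴴ) + (t : ℂ) • (W * (X₁ * Hᴴ)) + (t : ℂ) • (W * (H * X₁ᴴ)) +
          ((t : ℂ) ^ 2) • (W * (H * Hᴴ)) := by
      rw [expand t]
      simp only [Matrix.mul_add, Matrix.mul_smul]
    rw [e1, Matrix.trace_add, Matrix.trace_add, Matrix.trace_add, Matrix.trace_smul,
      Matrix.trace_smul, Matrix.trace_smul, hconj]
    simp only [Complex.add_re, smul_eq_mul, ← Complex.ofReal_pow, Complex.re_ofReal_mul,
      Complex.conj_re]
    rw [← hcdef, ← hbdef]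
    ring
  have hfeas : ∀ t : ℝ, S (X₁ + (t : ℂ) • H) = M := by
    intro t
    rw [map_add, _root_.map_smul, hSH, smul_zero, add_zero, h₁]
  have hpos : ∀ t : ℝ, 0 ≤ 2 * t * c + t ^ 2 * b := by
    intro t
    have h2 := hmin _ (hfeas t)
    rw [hqt t] at h2
    linarith
  have hc0 : 0 ≤ c := by
    by_contra hcon
    push_neg at hcon
    have hb1 : (0 : ℝ) < b + 1 := by linarith
    have h2 := hpos (-(c / (b + 1)))
    have h3 : 2 * (-(c / (b + 1))) * c + (-(c / (b + 1))) ^ 2 * b =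
        (c ^ 2 * (-(b + 2))) / (b + 1) ^ 2 * ((b + 1) / (b + 1)) := by
      field_simp
      ring
    rw [h3, div_self (ne_of_gt hb1), mul_one] at h2
    have hc2 : 0 < c ^ 2 := by nlinarith
    have hnum : c ^ 2 * -(b + 2) < 0 := by nlinarith
    have := div_neg_of_neg_of_pos hnum (pow_pos hb1 2)
    linarith
  have hX0 : X₀ = X₁ + ((1 : ℝ) : ℂ) • H := by
    rw [hH]
    simp
  have h1 := hqt 1
  rw [← hX0] at h1
  linarith [h1, hc0]


/-- `‖X^(ℓ+1) − X^ℓ‖_F² ≤ 2𝒜 (𝒥(X^ℓ,W^ℓ) − 𝒥(X^(ℓ+1),W^(ℓ+1)))`; in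
particular the squared increments are summable and the increments tend to `0`. -/
theorem statement7 {n p m : ℕ} (hnp : n ≤ p)
    (S : Matrix (Fin n) (Fin p) ℂ →ₗ[ℂ] (Fin m → ℂ)) (M : Fin m → ℂ) (γ : ℝ) (hγ : 0 < γ) (K : ℕ)
    (X : ℕ → Matrix (Fin n) (Fin p) ℂ) (W : ℕ → Matrix (Fin n) (Fin n) ℂ) (ε : ℕ → ℝ)
    (halg : IsIRLSM S M γ K X W ε) :
    ∃ A : ℝ, 0 < A ∧
      (∀ ℓ : ℕ, 1 ≤ ℓ →
        frobNorm (X (ℓ + 1) - X ℓ) ^ 2 ≤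
          2 * A * (Jfun (X ℓ) (W ℓ) - Jfun (X (ℓ + 1)) (W (ℓ + 1)))) ∧
      Summable (fun ℓ : ℕ => frobNorm (X (ℓ + 1) - X ℓ) ^ 2) ∧
      Filter.Tendsto (fun ℓ : ℕ => frobNorm (X (ℓ + 1) - X ℓ)) Filter.atTop (nhds 0) := by
  classical
  have hεnn : ∀ ℓ, 0 ≤ ε ℓ := by
    intro ℓ
    induction ℓ with
    | zero => rw [halg.eps_init]; norm_num
    | succ k ih =>
      by_cases hk : ε k = 0
      · rw [(halg.stopped k hk).2.2]
      · rw [halg.eps_update k hk]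
        exact le_min ih (mul_nonneg hγ.le (sv_nonneg _ _))
  have hεpos : ∀ ℓ, ε ℓ ≠ 0 → 0 < ε ℓ := fun ℓ h => (hεnn ℓ).lt_of_ne (Ne.symm h)
  have hεpred : ∀ j, ε (j + 1) ≠ 0 → ε j ≠ 0 := by
    intro j h hj
    exact h (halg.stopped j hj).2.2
  have hεmono : ∀ j, ε (j + 1) ≤ ε j := by
    intro j
    by_cases hj : ε j = 0
    · rw [(halg.stopped j hj).2.2, hj]
    · rw [halg.eps_update j hj]; exact min_le_left _ _
  have hJnn : ∀ ℓ, 0 ≤ Jfun (X ℓ) (W ℓ) := by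
    intro ℓ; rw [Jfun]; positivity
  have frob0 : ∀ q : ℕ, frobNorm (X q - X q) = 0 := by
    intro q; simp [frobNorm]
  have step : ∀ j : ℕ,
      Jfun (X (j + 2)) (W (j + 2)) ≤ Jfun (X (j + 1)) (W (j + 1)) ∧
      frobNorm (X (j + 2) - X (j + 1)) ^ 2 ≤
        (2 * Jfun (X (j + 1)) (W (j + 1)) + 1) *
          (2 * (Jfun (X (j + 1)) (W (j + 1)) - Jfun (X (j + 2)) (W (j + 2)))) := by
    intro j
    by_cases hε1 : ε (j + 1) = 0
    · obtain ⟨hX2, hW2, -⟩ := halg.stopped (j + 1) hε1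
      have hX2' : X (j + 2) = X (j + 1) := hX2
      have hW2' : W (j + 2) = W (j + 1) := hW2
      rw [hX2', hW2']
      exact ⟨le_refl _, by rw [frob0 (j + 1)]; simp⟩
    · have hε0 : ε j ≠ 0 := hεpred j hε1
      have hε1pos : 0 < ε (j + 1) := hεpos _ hε1
      obtain ⟨U, hUU, hU'U, hXdec, hWdec⟩ := halg.w_update j hε0 hε1
      have hσ1 : ∀ i : Fin n, 0 ≤ sv (X (j + 1)) (i : ℕ) := fun i => sv_nonneg _ _
      obtain ⟨hWpsd, hpart1, hpart2⟩ := Jfun_eigen_parts hUU hU'U hσ1 hε1pos hXdec hWdec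
      have hc1pos : ∀ k : Fin n, 0 < max (sv (X (j + 1)) (k : ℕ)) (ε (j + 1)) :=
        fun k => lt_of_lt_of_le hε1pos (le_max_right _ _)
      have hq : ∀ Y : Matrix (Fin n) (Fin p) ℂ,
          frobNorm (matSqrt (W (j + 1)) * Y) ^ 2 = (Matrix.trace (W (j + 1) * (Y * Yᴴ))).re :=
        fun Y => frobNorm_matSqrt_mul_sq hWpsd Y
      have hfeas1 : S (X (j + 1)) = M := halg.x_feasible j hε0
      have hfeas2 : S (X (j + 2)) = M := halg.x_feasible (j + 1) hε1
      have hmin' : ∀ Y, S Y = M → (Matrix.trace (W (j + 1) * (X (j + 2) * (X (j + 2))ᴴ))).re ≤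
          (Matrix.trace (W (j + 1) * (Y * Yᴴ))).re := by
        intro Y hY
        rw [← hq, ← hq]
        exact halg.x_min (j + 1) hε1 Y hY
      have hbnn : 0 ≤ (Matrix.trace (W (j + 1) *
          ((X (j + 2) - X (j + 1)) * (X (j + 2) - X (j + 1))ᴴ))).re := by
        rw [hWdec]; exact quad_nonneg hc1pos _
      have hHH : (X (j + 1) - X (j + 2)) * (X (j + 1) - X (j + 2))ᴴ =
          (X (j + 2) - X (j + 1)) * (X (j + 2) - X (j + 1))ᴴ := by
        rw [← neg_sub (X (j + 2)) (X (j + 1)), Matrix.conjTranspose_neg, Matrix.neg_mul,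
          Matrix.mul_neg, neg_neg]
      have horth := min_orth hWpsd.1 hfeas1 hfeas2 hmin' (by rw [hHH]; exact hbnn)
      rw [hHH] at horth
      have hJval : 2 * Jfun (X (j + 1)) (W (j + 1)) =
          (Matrix.trace (W (j + 1) * (X (j + 1) * (X (j + 1))ᴴ))).re +
            ∑ k : Fin n, max (sv (X (j + 1)) (k : ℕ)) (ε (j + 1)) := by
        rw [Jfun, hpart2, hq (X (j + 1))]
        ring
      have hA : ∀ k : Fin n, max (sv (X (j + 1)) (k : ℕ)) (ε (j + 1)) ≤
          2 * Jfun (X (j + 1)) (W (j + 1)) + 1 := by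
        intro k
        have h1 := Finset.single_le_sum
          (f := fun i : Fin n => max (sv (X (j + 1)) (i : ℕ)) (ε (j + 1)))
          (fun i _ => (hc1pos i).le) (Finset.mem_univ k)
        have h2 : 0 ≤ (Matrix.trace (W (j + 1) * (X (j + 1) * (X (j + 1))ᴴ))).re := by
          rw [hWdec]; exact quad_nonneg hc1pos _
        linarith
      have hlow : frobNorm (X (j + 2) - X (j + 1)) ^ 2 ≤
          (2 * Jfun (X (j + 1)) (W (j + 1)) + 1) *
            (Matrix.trace (W (j + 1) *
              ((X (j + 2) - X (j + 1)) * (X (j + 2) - X (j + 1))ᴴ))).re := by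
        have h := quad_lower hUU hc1pos hA (X (j + 2) - X (j + 1))
        rwa [← hWdec] at h
      have h2J1 : (0 : ℝ) ≤ 2 * Jfun (X (j + 1)) (W (j + 1)) + 1 := by
        linarith [hJnn (j + 1)]
      by_cases hε2 : ε (j + 2) = 0
      · have hW2 : W (j + 2) = W (j + 1) := halg.w_stop (j + 1) hε1 hε2
        have hd : Jfun (X (j + 1)) (W (j + 1)) - Jfun (X (j + 2)) (W (j + 2)) =
            ((Matrix.trace (W (j + 1) * (X (j + 1) * (X (j + 1))ᴴ))).re -
              (Matrix.trace (W (j + 1) * (X (j + 2) * (X (j + 2))ᴴ))).re) / 2 := by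
          simp only [Jfun]
          rw [hW2, hq (X (j + 1)), hq (X (j + 2))]
          ring
        have hq12 := hmin' (X (j + 1)) hfeas1
        have hle : Jfun (X (j + 2)) (W (j + 2)) ≤ Jfun (X (j + 1)) (W (j + 1)) := by
          linarith
        refine ⟨hle, ?_⟩
        have hb2 : (Matrix.trace (W (j + 1) *
            ((X (j + 2) - X (j + 1)) * (X (j + 2) - X (j + 1))ᴴ))).re ≤
            2 * (Jfun (X (j + 1)) (W (j + 1)) - Jfun (X (j + 2)) (W (j + 2))) := by
          linarith
        calc frobNorm (X (j + 2) - X (j + 1)) ^ 2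
            ≤ (2 * Jfun (X (j + 1)) (W (j + 1)) + 1) *
              (Matrix.trace (W (j + 1) *
                ((X (j + 2) - X (j + 1)) * (X (j + 2) - X (j + 1))ᴴ))).re := hlow
          _ ≤ (2 * Jfun (X (j + 1)) (W (j + 1)) + 1) *
              (2 * (Jfun (X (j + 1)) (W (j + 1)) - Jfun (X (j + 2)) (W (j + 2)))) :=
            mul_le_mul_of_nonneg_left hb2 h2J1
      · have hε2pos : 0 < ε (j + 2) := hεpos _ hε2
        obtain ⟨V, hVV, hV'V, hXdec2, hWdec2⟩ := halg.w_update (j + 1) hε1 hε2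
        have hXdec2' : X (j + 2) * (X (j + 2))ᴴ =
            V * Matrix.diagonal (fun i : Fin n => ((sv (X (j + 2)) (i : ℕ) : ℂ)) ^ 2) * Vᴴ :=
          hXdec2
        have hWdec2' : W (j + 2) = V * Matrix.diagonal
            (fun i : Fin n =>
              (((max (sv (X (j + 2)) (i : ℕ)) (ε (j + 2)) : ℝ) : ℂ))⁻¹) * Vᴴ := hWdec2
        have hσ2 : ∀ i : Fin n, 0 ≤ sv (X (j + 2)) (i : ℕ) := fun i => sv_nonneg _ _
        obtain ⟨hWpsd2, hpart1b, hpart2b⟩ :=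
          Jfun_eigen_parts hVV hV'V hσ2 hε2pos hXdec2' hWdec2'
        have hJval2 : 2 * Jfun (X (j + 2)) (W (j + 2)) =
            ∑ i : Fin n, (sv (X (j + 2)) (i : ℕ) ^ 2 /
              max (sv (X (j + 2)) (i : ℕ)) (ε (j + 2)) +
              max (sv (X (j + 2)) (i : ℕ)) (ε (j + 2))) := by
          rw [Jfun, hpart1b, hpart2b, ← Finset.sum_add_distrib]
          ring
        have hvn := vonNeumann hUU hU'U hVV hV'V hε2pos hσ2
          (c := fun k : Fin n => max (sv (X (j + 1)) (k : ℕ)) (ε (j + 1)))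
          (fun k => le_trans (hεmono (j + 1)) (le_max_right _ _))
        rw [← hXdec2', ← hWdec] at hvn
        have hq2le : 2 * Jfun (X (j + 2)) (W (j + 2)) ≤
            (Matrix.trace (W (j + 1) * (X (j + 2) * (X (j + 2))ᴴ))).re +
              ∑ k : Fin n, max (sv (X (j + 1)) (k : ℕ)) (ε (j + 1)) := by
          rw [hJval2]
          exact hvn
        have hq12 := hmin' (X (j + 1)) hfeas1
        have hle : Jfun (X (j + 2)) (W (j + 2)) ≤ Jfun (X (j + 1)) (W (j + 1)) := by
          linarith
        refine ⟨hle, ?_⟩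
        have hb2 : (Matrix.trace (W (j + 1) *
            ((X (j + 2) - X (j + 1)) * (X (j + 2) - X (j + 1))ᴴ))).re ≤
            2 * (Jfun (X (j + 1)) (W (j + 1)) - Jfun (X (j + 2)) (W (j + 2))) := by
          linarith
        calc frobNorm (X (j + 2) - X (j + 1)) ^ 2
            ≤ (2 * Jfun (X (j + 1)) (W (j + 1)) + 1) *
              (Matrix.trace (W (j + 1) *
                ((X (j + 2) - X (j + 1)) * (X (j + 2) - X (j + 1))ᴴ))).re := hlow
          _ ≤ (2 * Jfun (X (j + 1)) (W (j + 1)) + 1) *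
              (2 * (Jfun (X (j + 1)) (W (j + 1)) - Jfun (X (j + 2)) (W (j + 2)))) :=
            mul_le_mul_of_nonneg_left hb2 h2J1
  have Jmono : ∀ k : ℕ, Jfun (X (k + 1)) (W (k + 1)) ≤ Jfun (X 1) (W 1) := by
    intro k
    induction k with
    | zero => exact le_refl _
    | succ t ih => exact le_trans (step t).1 ih
  have final : ∀ j : ℕ, frobNorm (X (j + 2) - X (j + 1)) ^ 2 ≤
      2 * (2 * Jfun (X 1) (W 1) + 1) *
        (Jfun (X (j + 1)) (W (j + 1)) - Jfun (X (j + 2)) (W (j + 2))) := by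
    intro j
    have h := (step j).2
    have hm := Jmono j
    have hd0 : 0 ≤ Jfun (X (j + 1)) (W (j + 1)) - Jfun (X (j + 2)) (W (j + 2)) := by
      linarith [(step j).1]
    calc frobNorm (X (j + 2) - X (j + 1)) ^ 2
        ≤ (2 * Jfun (X (j + 1)) (W (j + 1)) + 1) *
          (2 * (Jfun (X (j + 1)) (W (j + 1)) - Jfun (X (j + 2)) (W (j + 2)))) := h
      _ ≤ (2 * Jfun (X 1) (W 1) + 1) *
          (2 * (Jfun (X (j + 1)) (W (j + 1)) - Jfun (X (j + 2)) (W (j + 2)))) :=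
        mul_le_mul_of_nonneg_right (by linarith) (by linarith)
      _ = 2 * (2 * Jfun (X 1) (W 1) + 1) *
          (Jfun (X (j + 1)) (W (j + 1)) - Jfun (X (j + 2)) (W (j + 2))) := by ring
  have hsum : Summable (fun ℓ : ℕ => frobNorm (X (ℓ + 1) - X ℓ) ^ 2) := by
    apply summable_of_sum_range_le
      (c := frobNorm (X 1 - X 0) ^ 2 +
        2 * (2 * Jfun (X 1) (W 1) + 1) * Jfun (X 1) (W 1)) (fun ℓ => sq_nonneg _)
    intro N
    cases N with
    | zero =>
      simp only [Finset.range_zero, Finset.sum_empty]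
      nlinarith [hJnn 1, sq_nonneg (frobNorm (X 1 - X 0))]
    | succ nn =>
      rw [Finset.sum_range_succ']
      have h1 : ∑ i ∈ Finset.range nn, frobNorm (X (i + 1 + 1) - X (i + 1)) ^ 2 ≤
          ∑ i ∈ Finset.range nn, 2 * (2 * Jfun (X 1) (W 1) + 1) *
            (Jfun (X (i + 1)) (W (i + 1)) - Jfun (X (i + 1 + 1)) (W (i + 1 + 1))) :=
        Finset.sum_le_sum fun i _ => final i
      have htel : ∑ i ∈ Finset.range nn, 2 * (2 * Jfun (X 1) (W 1) + 1) *
          (Jfun (X (i + 1)) (W (i + 1)) - Jfun (X (i + 1 + 1)) (W (i + 1 + 1))) =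
          2 * (2 * Jfun (X 1) (W 1) + 1) *
            (Jfun (X 1) (W 1) - Jfun (X (nn + 1)) (W (nn + 1))) := by
        rw [← Finset.mul_sum, Finset.sum_range_sub' (fun i => Jfun (X (i + 1)) (W (i + 1)))]
      have h4 : 2 * (2 * Jfun (X 1) (W 1) + 1) *
          (Jfun (X 1) (W 1) - Jfun (X (nn + 1)) (W (nn + 1))) ≤
          2 * (2 * Jfun (X 1) (W 1) + 1) * Jfun (X 1) (W 1) :=
        mul_le_mul_of_nonneg_left (by linarith [hJnn (nn + 1)]) (by linarith [hJnn 1])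
      have h0 : frobNorm (X (0 + 1) - X 0) ^ 2 = frobNorm (X 1 - X 0) ^ 2 := by norm_num
      rw [h0]
      linarith
  refine ⟨2 * Jfun (X 1) (W 1) + 1, by linarith [hJnn 1], ?_, hsum, ?_⟩
  · intro ℓ hℓ
    obtain ⟨j, rfl⟩ : ∃ j, ℓ = j + 1 := ⟨ℓ - 1, by omega⟩
    exact final j
  · have ht := hsum.tendsto_atTop_zero
    have heq : (fun ℓ : ℕ => frobNorm (X (ℓ + 1) - X ℓ)) =
        fun ℓ : ℕ => Real.sqrt (frobNorm (X (ℓ + 1) - X ℓ) ^ 2) :=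
      funext fun ℓ => (Real.sqrt_sq (frobNorm_nonneg' _)).symm
    rw [heq]
    have := (Real.continuous_sqrt.tendsto 0).comp ht
    simpa [Function.comp_def, Real.sqrt_zero] using this

end IRLSM
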